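/- Let n,ℓ ≥ 1 and write n = q(ℓ+1)+r with q ≥ 0 and 0 ≤ r ≤ ℓ. Then the family (Π_{v=1}^q Π_{u=0}^ℓ 1/h_{i_v+u})_{(i_1,…,i_q) ∈ E_{ℓ;n}} is summable, and n! · (Π_{i=1}^r h_i)^{−1} · Σ_{(i_1,…,i_q) ∈ E_{ℓ;n}} Π_{v=1}^q Π_{u=0}^ℓ 1/h_{i_v+u} = 1. -/

import Mathlib

open scoped BigOperators

/-- A cell of the plane `ℤ²`. -/
abbrev Cell : Type := ℤ × ℤ

/-- The partial order `⊴` on `ℤ²`: `(a,b) ⊴ (a',b')` iff `a ≥ a'` and `b ≥ b'`. -/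
def cellLE (u v : Cell) : Prop := v.1 ≤ u.1 ∧ v.2 ≤ u.2

/-- The cylinder `C_ω = ℤ²/ℤω`. -/
abbrev Cyl (ω : Cell) : Type := Cell ⧸ AddSubgroup.zmultiples ω

/-- The natural projection `π : ℤ² → C_ω`. -/
def pr (ω : Cell) : Cell → Cyl ω := QuotientAddGroup.mk

/-- The induced relation `⊴` on the cylinder: `x ⊴ y` iff some lifts satisfy `x̃ ⊴ ỹ`. -/
def cylLE (ω : Cell) (x y : Cyl ω) : Prop :=
  ∃ u v : Cell, pr ω u = x ∧ pr ω v = y ∧ cellLE u v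

/-- The hook of `x` in a diagram `Θ ⊆ ℤ²`. -/
def hookSet (Θ : Set Cell) (x : Cell) : Set Cell :=
  Θ ∩ ({y | ∃ k : ℤ, 0 ≤ k ∧ y = x + (k, 0)} ∪ {y | ∃ k : ℤ, 1 ≤ k ∧ y = x + (0, k)})

/-- The hook length of `x` in `Θ`. -/
noncomputable def hookLen (Θ : Set Cell) (x : Cell) : ℕ := (hookSet Θ x).ncard

/-- The hook length of a cell of the cylinder, computed via a lift. -/
noncomputable def cylHook (ω : Cell) (Θ : Set Cell) (x : Cyl ω) : ℕ :=
  hookLen Θ (Quotient.out x)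

/-- The `ℤω`-orbit of a cell. -/
def zline (ω y : Cell) : Set Cell := {z | ∃ k : ℤ, z = y + k • ω}

/-- `S + ℤω`. -/
def perClosure (ω : Cell) (S : Set Cell) : Set Cell := {z | ∃ y ∈ S, ∃ k : ℤ, z = y + k • ω}

/-- Translation of a set of cells by `u`. -/
def shiftSet (u : Cell) (S : Set Cell) : Set Cell := (· + u) '' S

/-- The semi-infinite diagram `λ̄ = {(a,b) : 1 ≤ a ≤ m, b ≤ λ_a}`. -/
def lowerDiag (m : ℤ) (lam : ℤ → ℤ) : Set Cell := {p | 1 ≤ p.1 ∧ p.1 ≤ m ∧ p.2 ≤ lam p.1}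

/-- The Young diagram `{(a,b) : 1 ≤ a ≤ m, 1 ≤ b ≤ λ_a}`. -/
def youngDiag (m : ℤ) (lam : ℤ → ℤ) : Set Cell :=
  {p | 1 ≤ p.1 ∧ p.1 ≤ m ∧ 1 ≤ p.2 ∧ p.2 ≤ lam p.1}

/-- The skew diagram `λ/μ = {(a,b) : 1 ≤ a ≤ m, μ_a < b ≤ λ_a}`. -/
def skewDiag (m : ℤ) (lam mu : ℤ → ℤ) : Set Cell :=
  {p | 1 ≤ p.1 ∧ p.1 ≤ m ∧ mu p.1 < p.2 ∧ p.2 ≤ lam p.1}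

/-- The periodic diagram `λ̃ = λ̄ + ℤ(m,−ℓ)`. -/
def perDiag (m l : ℤ) (lam : ℤ → ℤ) : Set Cell := perClosure (m, -l) (lowerDiag m lam)

/-- The cylindric diagram `λ̂ = π(λ̃)`. -/
def cylDiag (m l : ℤ) (lam : ℤ → ℤ) : Set (Cyl (m, -l)) := pr (m, -l) '' perDiag m l lam

/-- `λ ∈ P_{m,ℓ}`: an `ℓ`-restricted generalized partition of length `m`
(only the values `λ_1, …, λ_m` are relevant). -/
def IsRestricted (m l : ℤ) (lam : ℤ → ℤ) : Prop :=
  (∀ a : ℤ, 1 ≤ a → a < m → lam (a + 1) ≤ lam a) ∧ lam 1 - lam m ≤ l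

/-- `y` is a `D`-active cell (with ambient diagram `Θ`). -/
def IsActive (Θ D : Set Cell) (y : Cell) : Prop :=
  y ∈ D ∧ y + (1, 0) ∈ Θ \ D ∧ y + (0, 1) ∈ Θ \ D ∧ y + (1, 1) ∈ Θ \ D

/-- One elementary excitation inside `Θ`. -/
def exciteStep (Θ D E : Set Cell) : Prop :=
  ∃ y, IsActive Θ D y ∧ E = (D \ {y}) ∪ {y + (1, 1)}

/-- The excited diagrams of `M` in `Θ`. -/
def ExcitedSet (Θ M : Set Cell) : Set (Set Cell) :=
  {D | Relation.ReflTransGen (exciteStep Θ) M D}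

/-- One periodic elementary excitation inside `Θ`. -/
def pExciteStep (ω : Cell) (Θ D E : Set Cell) : Prop :=
  ∃ y, IsActive Θ D y ∧ E = (D \ zline ω y) ∪ zline ω (y + (1, 1))

/-- The periodic excited diagrams of `M` in `Θ`. -/
def PExcitedSet (ω : Cell) (Θ M : Set Cell) : Set (Set Cell) :=
  {D | Relation.ReflTransGen (pExciteStep ω Θ) M D}

/-- The cylindric excited diagrams: images under `π` of the periodic excited diagrams. -/
def CylExcitedSet (ω : Cell) (Θ M : Set Cell) : Set (Set (Cyl ω)) :=
  (fun D => pr ω '' D) '' PExcitedSet ω Θ M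

/-- A linear extension of `S` (with respect to a relation `R`): a bijection
`ε : S → {1,…,n}` with `ε x < ε y` whenever `R x y` and `x ≠ y`. -/
def IsLinExt {α : Type} (R : α → α → Prop) (S : Set α) (n : ℕ) (ε : S → Fin n) : Prop :=
  Function.Bijective ε ∧ ∀ x y : S, R (x : α) (y : α) → (x : α) ≠ (y : α) → ε x < ε y

/-- The number of linear extensions of `S`. -/
noncomputable def linExtCount {α : Type} (R : α → α → Prop) (S : Set α) (n : ℕ) : ℕ :=
  Nat.card {ε : S → Fin n // IsLinExt R S n ε}

/-- A reverse standard tableau on a (skew) diagram `S` of `n` cells. -/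
def IsRST (S : Set Cell) (n : ℕ) (ε : S → Fin n) : Prop :=
  Function.Bijective ε ∧
    (∀ x y : S, (y : Cell) = (x : Cell) + (0, 1) → ε y < ε x) ∧
    (∀ x y : S, (y : Cell) = (x : Cell) + (1, 0) → ε y < ε x)

/-- An `ℓ`-restricted reverse standard tableau on a skew diagram of length `m`. -/
def IsRSTl (m l : ℤ) (S : Set Cell) (n : ℕ) (ε : S → Fin n) : Prop :=
  IsRST S n ε ∧
    ∀ x y : S, (x : Cell).1 = 1 → (y : Cell) = (m, (x : Cell).2 - l) → ε x < ε y

/-- One lattice step: right by `(1,0)` or down by `(0,−1)`. -/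
def stepRel (a b : Cell) : Prop := b - a = (1, 0) ∨ b - a = (0, -1)

/-- `p` is (the list of cells of) a lattice path from `u` to `v`. -/
def IsLatticePathList (u v : Cell) (p : List Cell) : Prop :=
  p.head? = some u ∧ p.getLast? = some v ∧ p.Chain' stepRel

/-- `L(u,v)`: lattice paths from `u` to `v`, identified with their underlying sets of cells. -/
def LPath (u v : Cell) : Set (Set Cell) :=
  {S | ∃ p : List Cell, IsLatticePathList u v p ∧ S = {x | x ∈ p}}

/-- `L_Θ(u,v)`: lattice paths from `u` to `v` contained in `Θ`. -/
def LPathIn (Θ : Set Cell) (u v : Cell) : Set (Set Cell) := {S | S ∈ LPath u v ∧ S ⊆ Θ}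

/-- One lattice step on the cylinder. -/
def cylStep (ω : Cell) (x y : Cyl ω) : Prop :=
  ∃ u v : Cell, pr ω u = x ∧ pr ω v = y ∧ stepRel u v

/-- `S` is a non-intersecting loop of length `n` in the cylinder. -/
def IsNILoop (ω : Cell) (n : ℕ) (S : Set (Cyl ω)) : Prop :=
  ∃ u : ZMod n → Cyl ω, Function.Injective u ∧ S = Set.range u ∧
    ∀ i : ZMod n, cylStep ω (u i) (u (i + 1))

/-- `h^{s,t}_{m,ℓ}(x) = ℓ+m−a−b+dt+s+1` where `x = (a, b−dℓ)` with `2 ≤ b ≤ ℓ+1`, `d ≥ 0`. -/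
def hst (m l s t : ℤ) (x : Cell) : ℤ :=
  l + m - x.1 - x.2 + ((l + 1 - x.2) / l) * (t - l) + s + 1

/-- The hook lengths `h_i` of the bar case: `h_{ℓt+j} = (ℓ+1)t+j = i + (i−1)/ℓ`. -/
def hbar (l i : ℤ) : ℤ := i + (i - 1) / l

/-- The index set `E_{ℓ;n}` of the bar case. -/
def BarIndex (l q r : ℕ) : Type :=
  {v : Fin q → ℤ //
    (∀ h : 0 < q, (r : ℤ) + 1 ≤ v ⟨0, h⟩) ∧
    ∀ (i : ℕ) (h : i + 1 < q),
      v ⟨i, Nat.lt_of_succ_lt h⟩ + (l : ℤ) + 1 ≤ v ⟨i + 1, h⟩}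

/-- The summand `∏_{v=1}^q ∏_{u=0}^ℓ 1/h_{i_v+u}`. -/
noncomputable def barTerm (l q r : ℕ) (v : BarIndex l q r) : ℝ :=
  (∏ k : Fin q, ∏ u ∈ Finset.range (l + 1), ((hbar l (v.1 k + (u : ℤ))) : ℝ))⁻¹

namespace BarAux

noncomputable def wprod (l W : ℕ) (j : ℤ) : ℝ :=
  ∏ u ∈ Finset.range W, ((hbar l (j + u) : ℤ) : ℝ)

variable {l : ℕ}

lemma hbar_ge (hl : 1 ≤ l) {i : ℤ} (hi : 1 ≤ i) : i ≤ hbar l i := by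
  have h0 : 0 ≤ (i - 1) / (l : ℤ) := Int.ediv_nonneg (by omega) (by positivity)
  unfold hbar; omega

lemma hbar_pos (hl : 1 ≤ l) {i : ℤ} (hi : 1 ≤ i) : 1 ≤ hbar l i :=
  le_trans hi (hbar_ge hl hi)

lemma hbar_shift (hl : 1 ≤ l) (i : ℤ) : hbar l (i + l) = hbar l i + (l + 1) := by
  have h : (i - 1 + 1 * (l : ℤ)) / (l : ℤ) = (i - 1) / l + 1 :=
    Int.add_mul_ediv_right _ _ (by omega : (l : ℤ) ≠ 0)
  unfold hbar
  have : i + (l : ℤ) - 1 = i - 1 + 1 * l := by ring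
  rw [this, h]; ring

lemma hbar_shift_mul (hl : 1 ≤ l) (k : ℕ) (i : ℤ) :
    hbar l (i + k * l) = hbar l i + k * (l + 1) := by
  induction k with
  | zero => simp
  | succ k ih =>
    have : i + ((k : ℤ) + 1) * l = (i + k * l) + l := by ring
    push_cast
    rw [this, hbar_shift hl, ih]; push_cast; ring

lemma hbar_val (hl : 1 ≤ l) {t j : ℤ} (h1 : 1 ≤ j) (h2 : j ≤ l) :
    hbar l (l * t + j) = (l + 1) * t + j := by
  have h : (j - 1 + t * (l : ℤ)) / (l : ℤ) = (j-1) / l + t :=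
    Int.add_mul_ediv_right _ _ (by omega : (l : ℤ) ≠ 0)
  have h0 : (j - 1) / (l : ℤ) = 0 := Int.ediv_eq_zero_of_lt (by omega) (by omega)
  unfold hbar
  have e : (l : ℤ) * t + j - 1 = j - 1 + t * l := by ring
  rw [e, h, h0]; ring

lemma one_le_factor (hl : 1 ≤ l) {j : ℤ} (hj : 1 ≤ j) (u : ℕ) :
    (1 : ℝ) ≤ ((hbar l (j + u) : ℤ) : ℝ) := by
  exact_mod_cast hbar_pos hl (by omega : (1:ℤ) ≤ j + u)

lemma wprod_pos (hl : 1 ≤ l) {j : ℤ} (hj : 1 ≤ j) (W : ℕ) : 0 < wprod l W j :=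
  Finset.prod_pos fun u _ => lt_of_lt_of_le one_pos (one_le_factor hl hj u)

lemma wprod_succ (l W : ℕ) (j : ℤ) :
    wprod l (W + 1) j = wprod l W j * ((hbar l (j + W) : ℤ) : ℝ) := by
  unfold wprod; rw [Finset.prod_range_succ]

lemma wprod_succ' (l W : ℕ) (j : ℤ) :
    wprod l (W + 1) j = ((hbar l j : ℤ) : ℝ) * wprod l W (j + 1) := by
  unfold wprod
  rw [Finset.prod_range_succ']
  simp only [Nat.cast_zero, add_zero, Nat.cast_add, Nat.cast_one]
  rw [mul_comm]
  congr 1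
  apply Finset.prod_congr rfl
  intro u _
  congr 2
  push_cast
  ring

lemma wprod_add (l A B : ℕ) (j : ℤ) :
    wprod l (A + B) j = wprod l A j * wprod l B (j + A) := by
  unfold wprod
  rw [Finset.prod_range_add]
  congr 1
  apply Finset.prod_congr rfl
  intro u _
  congr 2
  push_cast
  ring

lemma one_le_wprod (hl : 1 ≤ l) {j : ℤ} (hj : 1 ≤ j) (W : ℕ) : 1 ≤ wprod l W j := by
  induction W with
  | zero => simp [wprod]
  | succ W ih =>
    rw [wprod_succ]
    nlinarith [one_le_factor hl hj W]

lemma wprod_ge (hl : 1 ≤ l) {j : ℤ} (hj : 1 ≤ j) {W : ℕ} (hW : 0 < W) :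
    ((hbar l j : ℤ) : ℝ) ≤ wprod l W j := by
  obtain ⟨W', rfl⟩ : ∃ W', W = W' + 1 := ⟨W - 1, by omega⟩
  rw [wprod_succ']
  have h1 : (1:ℝ) ≤ wprod l W' (j + 1) := one_le_wprod hl (by omega) W'
  have h0 : (0:ℝ) ≤ ((hbar l j : ℤ) : ℝ) := by
    have := hbar_pos hl hj; exact_mod_cast (by omega : (0:ℤ) ≤ hbar l j)
  nlinarith



def natEquiv (M : ℤ) : ℕ ≃ {j : ℤ // M ≤ j} where
  toFun n := ⟨M + n, by omega⟩
  invFun j := (j.1 - M).toNat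
  left_inv n := by simp
  right_inv j := by
    ext
    simp only
    omega

lemma telescope (hl : 1 ≤ l) {k : ℕ} (hk : 0 < k) {M : ℤ} (hM : 1 ≤ M) :
    HasSum (fun j : {j : ℤ // M ≤ j} => (wprod l (k * l + 1) j.1)⁻¹)
      (((k : ℝ) * (l + 1))⁻¹ * (wprod l (k * l) M)⁻¹) := by
  rw [← (natEquiv M).hasSum_iff]
  set c : ℝ := ((k : ℝ) * (l + 1))⁻¹ with hc
  set G : ℕ → ℝ := fun n => (wprod l (k * l) (M + n))⁻¹ with hG
  have hpos : ∀ n : ℕ, (0:ℝ) < wprod l (k*l) (M + n) :=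
    fun n => wprod_pos hl (by omega) _
  have hposW : ∀ n : ℕ, (0:ℝ) < wprod l (k*l+1) (M + n) :=
    fun n => wprod_pos hl (by omega) _
  have key : ∀ n : ℕ, (wprod l (k * l + 1) (M + n))⁻¹ = c * (G n - G (n + 1)) := by
    intro n
    set j : ℤ := M + n with hj
    have hj1 : (1:ℤ) ≤ j := by omega
    have e1 : wprod l (k*l+1) j = wprod l (k*l) j * ((hbar l (j + (k*l : ℕ)) : ℤ) : ℝ) :=
      wprod_succ l (k*l) j
    have e2 : wprod l (k*l+1) j = ((hbar l j : ℤ) : ℝ) * wprod l (k*l) (j + 1) :=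
      wprod_succ' l (k*l) j
    have e3 : hbar l (j + (k*l : ℕ)) = hbar l j + (k : ℤ) * (l + 1) := by
      push_cast
      rw [hbar_shift_mul hl k j]
    have hGn1 : G (n+1) = (wprod l (k*l) (j+1))⁻¹ := by
      simp only [hG]
      congr 1
      push_cast
      rw [hj]; ring
    have ha := hpos n
    have hb : (0:ℝ) < wprod l (k*l) (j+1) := wprod_pos hl (by omega) _
    have hh : (0:ℝ) < ((hbar l j : ℤ) : ℝ) := by
      have := hbar_pos hl hj1; exact_mod_cast (by omega : (0:ℤ) < hbar l j)
    have hhc : ((hbar l (j + (k*l:ℕ)) : ℤ) : ℝ) = ((hbar l j : ℤ) : ℝ) + (k:ℝ)*(l+1) := by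
      exact_mod_cast congrArg (fun z : ℤ => (z : ℝ)) e3
    have hδ : (0:ℝ) < (k:ℝ)*(l+1) := by positivity
    rw [hGn1]
    simp only [hG]
    rw [e1, hhc]
    have hab : wprod l (k*l) j * (((hbar l j : ℤ) : ℝ) + (k:ℝ)*(l+1))
        = ((hbar l j : ℤ) : ℝ) * wprod l (k*l) (j+1) := by
      rw [← hhc, ← e1, e2]
    rw [hc]
    rw [show M + (n:ℤ) = j from hj.symm] at ha ⊢
    field_simp
    nlinarith [hab, mul_pos ha hb, mul_pos hh hδ]
  have hnn : ∀ n : ℕ, (0:ℝ) ≤ ((fun n : ℕ => (wprod l (k*l+1) (M+n))⁻¹) n) :=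
    fun n => le_of_lt (inv_pos.2 (hposW n))
  have hfun : ((fun j : {j : ℤ // M ≤ j} => (wprod l (k * l + 1) j.1)⁻¹) ∘ natEquiv M)
      = fun n : ℕ => (wprod l (k*l+1) (M+n))⁻¹ := rfl
  rw [hfun, hasSum_iff_tendsto_nat_of_nonneg hnn]
  have hps : ∀ n : ℕ, ∑ i ∈ Finset.range n, (wprod l (k*l+1) (M+i))⁻¹
      = c * (G 0 - G n) := by
    intro n
    rw [show (∑ i ∈ Finset.range n, (wprod l (k*l+1) (M+i))⁻¹)
        = ∑ i ∈ Finset.range n, c * (G i - G (i+1)) from Finset.sum_congr rfl fun i _ => key i]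
    rw [← Finset.mul_sum, Finset.sum_range_sub' G n]
  simp only [hps]
  have hG0 : G 0 = (wprod l (k*l) M)⁻¹ := by simp [hG]
  have hGlim : Filter.Tendsto G Filter.atTop (nhds 0) := by
    apply squeeze_zero (fun n => le_of_lt (inv_pos.2 (hpos n)))
      (g := fun n : ℕ => ((n : ℝ) + 1)⁻¹)
    · intro n
      apply inv_anti₀ (by positivity)
      calc ((n:ℝ) + 1) ≤ ((hbar l (M + n) : ℤ) : ℝ) := by
            have := hbar_ge hl (by omega : (1:ℤ) ≤ M + n)
            have h2 : ((n:ℤ) + 1 : ℤ) ≤ hbar l (M + n) := by omega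
            exact_mod_cast h2
        _ ≤ wprod l (k*l) (M + n) := wprod_ge hl (by omega) (by positivity)
    · simpa only [one_div] using tendsto_one_div_add_atTop_nhds_zero_nat (𝕜 := ℝ)
  have : Filter.Tendsto (fun n => c * (G 0 - G n)) Filter.atTop (nhds (c * (G 0 - 0))) :=
    Filter.Tendsto.const_mul c ((tendsto_const_nhds).sub hGlim)
  simpa [hG0] using this


def Idx (l k : ℕ) (M : ℤ) : Type :=
  {v : Fin k → ℤ //
    (∀ h : 0 < k, M ≤ v ⟨0, h⟩) ∧
    ∀ (i : ℕ) (h : i + 1 < k), v ⟨i, Nat.lt_of_succ_lt h⟩ + (l : ℤ) + 1 ≤ v ⟨i + 1, h⟩}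

noncomputable def Fterm (l k : ℕ) (M : ℤ) (v : Idx l k M) : ℝ :=
  ∏ i : Fin k, (wprod l (l + 1) (v.1 i))⁻¹

instance (l : ℕ) (M : ℤ) : Unique (Idx l 0 M) where
  default := ⟨fun i => i.elim0, fun h => absurd h (by omega), fun i h => absurd h (by omega)⟩
  uniq v := Subtype.ext (funext fun i => i.elim0)

lemma entry_ge {k : ℕ} {M : ℤ} (v : Idx l k M) :
    ∀ (i : ℕ) (h : i < k), M ≤ v.1 ⟨i, h⟩ := by
  intro i
  induction i with
  | zero => intro h; exact v.2.1 h
  | succ i ih =>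
    intro h
    have h1 := v.2.2 i h
    have h2 := ih (Nat.lt_of_succ_lt h)
    omega

lemma Fterm_nonneg (hl : 1 ≤ l) {k : ℕ} {M : ℤ} (hM : 1 ≤ M) (v : Idx l k M) :
    0 ≤ Fterm l k M v := by
  apply Finset.prod_nonneg
  intro i _
  have : 1 ≤ v.1 i := le_trans hM (by simpa using entry_ge v i.1 i.2)
  exact le_of_lt (inv_pos.2 (wprod_pos hl this _))

def idxEquiv (l k : ℕ) (M : ℤ) :
    Idx l (k + 1) M ≃ Σ j : {j : ℤ // M ≤ j}, Idx l k (j.1 + l + 1) where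
  toFun v := ⟨⟨v.1 ⟨0, Nat.succ_pos k⟩, v.2.1 (Nat.succ_pos k)⟩,
    ⟨fun i => v.1 i.succ, by
      constructor
      · intro h
        exact v.2.2 0 (by omega)
      · intro i h
        exact v.2.2 (i + 1) (by omega)⟩⟩
  invFun p := ⟨Fin.cons p.1.1 p.2.1, by
    constructor
    · intro _
      exact p.1.2
    · intro i h
      cases i with
      | zero =>
        have h0 := p.2.2.1
        rcases Nat.eq_zero_or_pos k with hk | hk
        · omega
        · have := h0 hk
          simpa [Fin.cons] using this
      | succ i =>
        have := p.2.2.2 i (by omega)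
        simpa [Fin.cons] using this⟩
  left_inv v := by
    apply Subtype.ext
    funext i
    refine Fin.cases ?_ ?_ i
    · simp
    · intro i
      simp
  right_inv p := by
    rcases p with ⟨j, w⟩
    refine Sigma.ext ?_ ?_
    · simp
    · apply heq_of_eq
      apply Subtype.ext
      funext i
      simp


noncomputable def Tval (l k : ℕ) (M : ℤ) : ℝ :=
  ((k.factorial * (l + 1) ^ k : ℕ) : ℝ)⁻¹ * (wprod l (k * l) M)⁻¹

lemma main_hasSum (hl : 1 ≤ l) :
    ∀ (k : ℕ) (M : ℤ), 1 ≤ M → HasSum (Fterm l k M) (Tval l k M) := by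
  intro k
  induction k with
  | zero =>
    intro M hM
    have h : Fterm l 0 M default = 1 := by simp [Fterm]
    have h2 : HasSum (Fterm l 0 M) (∑ v, Fterm l 0 M v) := hasSum_fintype _
    rw [Fintype.sum_unique, h] at h2
    simpa [Tval, wprod] using h2
  | succ k ih =>
    intro M hM
    set E := idxEquiv l k M with hE
    rw [← E.symm.hasSum_iff]
    set f : (Σ j : {j : ℤ // M ≤ j}, Idx l k (j.1 + l + 1)) → ℝ :=
      fun p => Fterm l (k+1) M (E.symm p) with hf
    have hsplit : ∀ p : (Σ j : {j : ℤ // M ≤ j}, Idx l k (j.1 + l + 1)),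
        f p = (wprod l (l+1) p.1.1)⁻¹ * Fterm l k (p.1.1 + l + 1) p.2 := by
      rintro ⟨j, w⟩
      simp only [hf, hE, Fterm, idxEquiv, Equiv.coe_fn_symm_mk]
      rw [Fin.prod_univ_succ]
      simp
      rfl
    have hinner : ∀ j : {j : ℤ // M ≤ j},
        HasSum (fun w => f ⟨j, w⟩)
          ((wprod l (l+1) j.1)⁻¹ * Tval l k (j.1 + l + 1)) := by
      intro j
      have h1 : (1:ℤ) ≤ j.1 + l + 1 := by have := j.2; omega
      have h2 := (ih (j.1 + l + 1) h1).mul_left (wprod l (l+1) j.1)⁻¹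
      have hfun : (fun w => f ⟨j, w⟩)
          = fun w => (wprod l (l+1) j.1)⁻¹ * Fterm l k (j.1 + l + 1) w :=
        funext fun w => hsplit ⟨j, w⟩
      rw [hfun]
      exact h2
    have houter : HasSum (fun j : {j : ℤ // M ≤ j} =>
        (wprod l (l+1) j.1)⁻¹ * Tval l k (j.1 + l + 1)) (Tval l (k+1) M) := by
      have hg : ∀ j : {j : ℤ // M ≤ j},
          (wprod l (l+1) j.1)⁻¹ * Tval l k (j.1 + l + 1)
            = ((k.factorial * (l + 1) ^ k : ℕ) : ℝ)⁻¹ * (wprod l ((k+1) * l + 1) j.1)⁻¹ := by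
        intro j
        have hj1 : (1:ℤ) ≤ j.1 := le_trans hM j.2
        have hmerge : wprod l ((l+1) + k*l) j.1
            = wprod l (l+1) j.1 * wprod l (k*l) (j.1 + (l+1)) := wprod_add l (l+1) (k*l) j.1
        have harg : (j.1 + ((l:ℤ)+1)) = j.1 + l + 1 := by push_cast; ring
        have hlen : (l+1) + k*l = (k+1)*l + 1 := by ring
        rw [Tval, ← mul_assoc, mul_comm (wprod l (l+1) j.1)⁻¹, mul_assoc]
        congr 1
        rw [← mul_inv, ← harg, ← hmerge, hlen]
      have ht := telescope hl (k := k+1) (by omega) hM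
      have h3 := ht.mul_left ((k.factorial * (l + 1) ^ k : ℕ) : ℝ)⁻¹
      rw [funext hg]
      convert h3 using 1
      on_goal 1 => rfl
      rw [Tval, ← mul_assoc]
      congr 1
      rw [← mul_inv]
      congr 1
      push_cast [Nat.factorial_succ]
      ring
    have hnn : ∀ p, 0 ≤ f p := by
      intro p
      rw [hsplit p]
      have hj1 : (1:ℤ) ≤ p.1.1 := le_trans hM p.1.2
      have h1 : (1:ℤ) ≤ p.1.1 + l + 1 := by omega
      exact mul_nonneg (le_of_lt (inv_pos.2 (wprod_pos hl hj1 _))) (Fterm_nonneg hl h1 p.2)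
    have hsummable : Summable f := by
      rw [summable_sigma_of_nonneg hnn]
      refine ⟨fun j => (hinner j).summable, ?_⟩
      apply houter.summable.congr
      intro j
      exact ((hinner j).tsum_eq).symm
    have htot : HasSum f (∑' p, f p) := hsummable.hasSum
    have := htot.sigma hinner
    have heq : (∑' p, f p) = Tval l (k+1) M := this.unique houter
    rw [← heq]
    exact htot


lemma fact_step (hl : 1 ≤ l) (t j : ℕ) (h1 : 1 ≤ j) (h2 : j + 1 ≤ l)
    (prev : (∏ i ∈ Finset.Icc 1 (l*t+j), hbar l (i:ℤ)) * ((l+1:ℤ)^t * (t.factorial : ℤ))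
      = (((l+1)*t+j).factorial : ℤ)) :
    (∏ i ∈ Finset.Icc 1 (l*t+(j+1)), hbar l (i:ℤ)) * ((l+1:ℤ)^t * (t.factorial : ℤ))
      = (((l+1)*t+(j+1)).factorial : ℤ) := by
  have e1 : l*t+(j+1) = (l*t+j) + 1 := by ring
  rw [e1, Finset.prod_Icc_succ_top (by omega : 1 ≤ l*t+j+1)]
  have e2 : hbar l ((l*t+j+1 : ℕ) : ℤ) = ((l:ℤ)+1)*t + ((j:ℤ)+1) := by
    have h := hbar_val hl (t := (t:ℤ)) (j := (j:ℤ)+1) (by omega) (by omega)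
    have harg : ((l*t+j+1 : ℕ) : ℤ) = (l:ℤ)*t + ((j:ℤ)+1) := by push_cast; ring
    rw [harg, h]
  have e3 : (l+1)*t+(j+1) = ((l+1)*t+j) + 1 := by ring
  rw [e2, e3, Nat.factorial_succ]
  push_cast
  linear_combination (((l:ℤ)+1)*t+j+1) * prev

lemma fact_prod (hl : 1 ≤ l) : ∀ (t j : ℕ), 1 ≤ j → j ≤ l →
    (∏ i ∈ Finset.Icc 1 (l*t+j), hbar l (i:ℤ)) * ((l+1:ℤ)^t * (t.factorial : ℤ))
      = (((l+1)*t+j).factorial : ℤ) := by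
  intro t
  induction t with
  | zero =>
    refine Nat.le_induction ?_ ?_
    · intro _
      have e : l*0+1 = 1 := by ring
      rw [e]
      have h2 : Finset.Icc 1 1 = ({1} : Finset ℕ) := Finset.Icc_self 1
      rw [h2, Finset.prod_singleton]
      norm_num [hbar]
    · intro j hj ihj h2
      have prev := ihj (by omega)
      exact fact_step hl 0 j hj h2 prev
  | succ t ih =>
    refine Nat.le_induction ?_ ?_
    · intro _
      have base := ih l hl le_rfl
      have e1 : l*(t+1)+1 = (l*t+l) + 1 := by ring
      rw [e1, Finset.prod_Icc_succ_top (by omega : 1 ≤ l*t+l+1)]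
      have e2 : hbar l ((l*t+l+1 : ℕ) : ℤ) = ((l:ℤ)+1)*((t:ℤ)+1) + 1 := by
        have h := hbar_val hl (t := (t:ℤ)+1) (j := (1:ℤ)) (by omega) (by exact_mod_cast hl)
        have harg : ((l*t+l+1 : ℕ) : ℤ) = (l:ℤ)*((t:ℤ)+1) + 1 := by push_cast; ring
        rw [harg, h]
      have e3 : (l+1)*(t+1)+1 = (((l+1)*t+l) + 1) + 1 := by ring
      rw [e2, e3, Nat.factorial_succ, Nat.factorial_succ]
      push_cast [Nat.factorial_succ, pow_succ]
      linear_combination ((((l:ℤ)+1)*t+l+2) * (((l:ℤ)+1)*t+l+1)) * base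
    · intro j hj ihj h2
      have prev := ihj (by omega)
      exact fact_step hl (t+1) j hj h2 prev

lemma fact_prod_all (hl : 1 ≤ l) (q r : ℕ) (hr : r ≤ l) (hn : 1 ≤ q*(l+1)+r) :
    (∏ i ∈ Finset.Icc 1 (q*l+r), hbar l (i:ℤ)) * ((l+1:ℤ)^q * (q.factorial : ℤ))
      = (((q*(l+1)+r).factorial : ℕ) : ℤ) := by
  rcases Nat.eq_zero_or_pos r with rfl | hrpos
  · have hq : 1 ≤ q := by
      rcases Nat.eq_zero_or_pos q with rfl | h
      · simp at hn
      · exact h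
    obtain ⟨q', rfl⟩ : ∃ q', q = q' + 1 := ⟨q - 1, by omega⟩
    have base := fact_prod hl q' l hl le_rfl
    have e1 : (q'+1)*l+0 = l*q'+l := by ring
    have e2 : (q'+1)*(l+1)+0 = ((l+1)*q'+l) + 1 := by ring
    rw [e1, e2, Nat.factorial_succ]
    push_cast [Nat.factorial_succ, pow_succ]
    linear_combination (((l:ℤ)+1)*q'+l+1) * base
  · have base := fact_prod hl q r hrpos hr
    have e1 : q*l+r = l*q+r := by ring
    have e2 : q*(l+1)+r = (l+1)*q+r := by ring
    rw [e1, e2]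
    exact base

lemma icc_wprod (hl : 1 ≤ l) : ∀ m : ℕ,
    (∏ i ∈ Finset.Icc 1 m, ((hbar l (i:ℤ) : ℤ) : ℝ)) = wprod l m 1 := by
  intro m
  induction m with
  | zero => simp [wprod]
  | succ m ih =>
    rw [Finset.prod_Icc_succ_top (by omega : 1 ≤ m+1), ih, wprod_succ]
    congr 2
    push_cast
    ring

end BarAux

/-- The bar-case hook sum identity:
`n! · (∏_{i=1}^r h_i)⁻¹ · Σ_{(i_1,…,i_q) ∈ E_{ℓ;n}} ∏_v ∏_u 1/h_{i_v+u} = 1`. -/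
theorem bar_case_hook_sum (n l q r : ℕ) (hn : 1 ≤ n) (hl : 1 ≤ l) (hr : r ≤ l)
    (hdecomp : n = q * (l + 1) + r) :
    Summable (barTerm l q r) ∧
    (n.factorial : ℝ) * (∏ i ∈ Finset.Icc 1 r, ((hbar l (i : ℤ)) : ℝ))⁻¹ *
      (∑' v : BarIndex l q r, barTerm l q r v) = 1 := by
  have hM : (1:ℤ) ≤ (r:ℤ) + 1 := by omega
  have H : HasSum (BarAux.Fterm l q ((r:ℤ)+1)) (BarAux.Tval l q ((r:ℤ)+1)) :=
    BarAux.main_hasSum hl q ((r:ℤ)+1) hM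
  have hterm : ∀ v : BarIndex l q r, barTerm l q r v = BarAux.Fterm l q ((r:ℤ)+1) v := by
    intro v
    unfold barTerm BarAux.Fterm BarAux.wprod
    rw [Finset.prod_inv_distrib]
  have Hb : HasSum (barTerm l q r) (BarAux.Tval l q ((r:ℤ)+1)) := by
    have he : barTerm l q r = BarAux.Fterm l q ((r:ℤ)+1) := funext hterm
    rw [he]
    exact H
  refine ⟨Hb.summable, ?_⟩
  rw [Hb.tsum_eq]
  unfold BarAux.Tval
  set W := BarAux.wprod l (q*l) ((r:ℤ)+1) with hW
  have hP : (∏ i ∈ Finset.Icc 1 r, ((hbar l (i:ℤ) : ℤ) : ℝ)) = BarAux.wprod l r 1 :=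
    BarAux.icc_wprod hl r
  have hX : (∏ i ∈ Finset.Icc 1 (q*l+r), ((hbar l (i:ℤ) : ℤ) : ℝ))
      = BarAux.wprod l (q*l+r) 1 := BarAux.icc_wprod hl (q*l+r)
  have hn' : 1 ≤ q*(l+1)+r := hdecomp ▸ hn
  have hfZ := BarAux.fact_prod_all hl q r hr hn'
  have hfZ' : (∏ i ∈ Finset.Icc 1 (q*l+r), hbar l (i:ℤ)) * ((q.factorial * (l+1)^q : ℕ) : ℤ)
      = (((q*(l+1)+r).factorial : ℕ) : ℤ) := by
    push_cast
    push_cast at hfZ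
    linear_combination hfZ
  have hfR : (∏ i ∈ Finset.Icc 1 (q*l+r), ((hbar l (i:ℤ) : ℤ) : ℝ))
      * ((q.factorial * (l+1)^q : ℕ) : ℝ) = (n.factorial : ℝ) := by
    rw [hdecomp]
    exact_mod_cast hfZ'
  have hXpw : BarAux.wprod l (q*l+r) 1 = BarAux.wprod l r 1 * W := by
    have h1 : q*l+r = r+q*l := by ring
    rw [h1, BarAux.wprod_add l r (q*l) 1, hW]
    rw [add_comm (1:ℤ) (r:ℤ)]
  have hfR2 : BarAux.wprod l r 1 * W * ((q.factorial * (l+1)^q : ℕ) : ℝ)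
      = (n.factorial : ℝ) := by rw [← hXpw, ← hX]; exact hfR
  have hPpos : (0:ℝ) < BarAux.wprod l r 1 := BarAux.wprod_pos hl le_rfl r
  have hWpos : (0:ℝ) < W := BarAux.wprod_pos hl hM (q*l)
  have hCpos : (0:ℝ) < ((q.factorial * (l+1)^q : ℕ) : ℝ) := by
    have : 0 < q.factorial * (l+1)^q := Nat.mul_pos q.factorial_pos (Nat.pow_pos (by omega))
    exact_mod_cast this
  rw [hP, ← hfR2]
  field_simp
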